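/- Let A ∈ ℝ^{N×N} and B ∈ ℂ^{M×N} with rank B = N such that BAC_B is anti-hermitian. Suppose additionally that B†B is a real matrix, that BAC_B has at most s nonzero entries per row and per column (s-sparse), and that BAC_B* has at most s' nonzero entries per row and per column, where C_B* denotes the entrywise complex conjugate of C_B. Then defining B' = [Re B; Im B] ∈ ℝ^{2M×N}, the matrix B'AC_{B'} is 2(s+s')-sparse. -/

import Mathlib

open Matrix

/-- A matrix is `k`-sparse if each row and each column has at most `k` nonzero entries. -/
def IsSparse {m n α : Type*} [Fintype m] [Fintype n] [Zero α]
    (k : ℕ) (X : Matrix m n α) : Prop :=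
  (∀ i, {j | X i j ≠ 0}.ncard ≤ k) ∧ (∀ j, {i | X i j ≠ 0}.ncard ≤ k)

/-- Counting lemma: a set of indices in `Fin M ⊕ Fin M` whose underlying `Fin M` indices all lie
in `S ∪ S'` has cardinality at most `2 * (k + k')`. -/
lemma card_aux {M k k' : ℕ} (S S' : Set (Fin M)) (hS : S.ncard ≤ k) (hS' : S'.ncard ≤ k')
    (U : Set (Fin M ⊕ Fin M)) (hU : ∀ x ∈ U, Sum.elim id id x ∈ S ∪ S') :
    U.ncard ≤ 2 * (k + k') := by
  have hsub : U ⊆ Sum.inl '' (S ∪ S') ∪ Sum.inr '' (S ∪ S') := by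
    intro x hx
    cases x with
    | inl j => exact Or.inl ⟨j, hU _ hx, rfl⟩
    | inr j => exact Or.inr ⟨j, hU _ hx, rfl⟩
  have h1 : (S ∪ S').ncard ≤ k + k' :=
    le_trans (Set.ncard_union_le _ _) (add_le_add hS hS')
  calc U.ncard ≤ (Sum.inl '' (S ∪ S') ∪ Sum.inr '' (S ∪ S')).ncard :=
        Set.ncard_le_ncard hsub (Set.toFinite _)
    _ ≤ (Sum.inl '' (S ∪ S')).ncard + (Sum.inr '' (S ∪ S')).ncard := Set.ncard_union_le _ _
    _ = (S ∪ S').ncard + (S ∪ S').ncard := by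
        rw [Set.ncard_image_of_injective _ Sum.inl_injective,
          Set.ncard_image_of_injective _ Sum.inr_injective]
    _ ≤ 2 * (k + k') := by omega

lemma map_ofReal_mul {m n p : Type*} [Fintype n] (X : Matrix m n ℝ) (Y : Matrix n p ℝ) :
    (X * Y).map Complex.ofReal = X.map Complex.ofReal * Y.map Complex.ofReal :=
  Matrix.map_mul (f := Complex.ofRealHom)

lemma map_ofReal_add {m n : Type*} (X Y : Matrix m n ℝ) :
    (X + Y).map Complex.ofReal = X.map Complex.ofReal + Y.map Complex.ofReal := by
  ext i j; simp

lemma map_ofReal_sub {m n : Type*} (X Y : Matrix m n ℝ) :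
    (X - Y).map Complex.ofReal = X.map Complex.ofReal - Y.map Complex.ofReal := by
  ext i j; simp

lemma decompB {M N : ℕ} (B : Matrix (Fin M) (Fin N) ℂ) :
    B = (B.map Complex.re).map Complex.ofReal
        + Complex.I • (B.map Complex.im).map Complex.ofReal := by
  ext i j
  simp [Complex.ext_iff]

lemma decompBH {M N : ℕ} (B : Matrix (Fin M) (Fin N) ℂ) :
    Bᴴ = ((B.map Complex.re)ᵀ).map Complex.ofReal
        - Complex.I • ((B.map Complex.im)ᵀ).map Complex.ofReal := by
  ext i j
  simp [Complex.ext_iff, conjTranspose_apply]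

lemma decompBT {M N : ℕ} (B : Matrix (Fin M) (Fin N) ℂ) :
    Bᵀ = ((B.map Complex.re)ᵀ).map Complex.ofReal
        + Complex.I • ((B.map Complex.im)ᵀ).map Complex.ofReal := by
  ext i j
  simp [Complex.ext_iff]

/-- Expansion of `B * Q * Bᴴ` for real `Q`. -/
lemma Kexp₁ {M N : ℕ} (B : Matrix (Fin M) (Fin N) ℂ) (Q : Matrix (Fin N) (Fin N) ℝ) :
    B * Q.map Complex.ofReal * Bᴴ
      = (B.map Complex.re * Q * (B.map Complex.re)ᵀ
          + B.map Complex.im * Q * (B.map Complex.im)ᵀ).map Complex.ofReal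
        + Complex.I • ((B.map Complex.im * Q * (B.map Complex.re)ᵀ
          - B.map Complex.re * Q * (B.map Complex.im)ᵀ).map Complex.ofReal) := by
  set X := (B.map Complex.re).map Complex.ofReal
  set Y := (B.map Complex.im).map Complex.ofReal
  have key : (X + Complex.I • Y) * Q.map Complex.ofReal
        * (((B.map Complex.re)ᵀ).map Complex.ofReal
            - Complex.I • ((B.map Complex.im)ᵀ).map Complex.ofReal)
      = (X * Q.map Complex.ofReal * ((B.map Complex.re)ᵀ).map Complex.ofReal
          + Y * Q.map Complex.ofReal * ((B.map Complex.im)ᵀ).map Complex.ofReal)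
        + Complex.I • (Y * Q.map Complex.ofReal * ((B.map Complex.re)ᵀ).map Complex.ofReal
          - X * Q.map Complex.ofReal * ((B.map Complex.im)ᵀ).map Complex.ofReal) := by
    simp only [Matrix.add_mul, Matrix.mul_sub, Matrix.smul_mul, Matrix.mul_smul, smul_smul,
      Complex.I_mul_I, neg_smul, one_smul, smul_sub, smul_add, sub_neg_eq_add]
    abel
  rw [← decompB B] at key
  rw [← decompBH B] at key
  rw [key]
  simp only [map_ofReal_add, map_ofReal_sub, map_ofReal_mul]
  rfl

/-- Expansion of `B * Q * Bᵀ` for real `Q`. -/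
lemma Kexp₂ {M N : ℕ} (B : Matrix (Fin M) (Fin N) ℂ) (Q : Matrix (Fin N) (Fin N) ℝ) :
    B * Q.map Complex.ofReal * Bᵀ
      = (B.map Complex.re * Q * (B.map Complex.re)ᵀ
          - B.map Complex.im * Q * (B.map Complex.im)ᵀ).map Complex.ofReal
        + Complex.I • ((B.map Complex.im * Q * (B.map Complex.re)ᵀ
          + B.map Complex.re * Q * (B.map Complex.im)ᵀ).map Complex.ofReal) := by
  set X := (B.map Complex.re).map Complex.ofReal
  set Y := (B.map Complex.im).map Complex.ofReal
  have key : (X + Complex.I • Y) * Q.map Complex.ofReal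
        * (((B.map Complex.re)ᵀ).map Complex.ofReal
            + Complex.I • ((B.map Complex.im)ᵀ).map Complex.ofReal)
      = (X * Q.map Complex.ofReal * ((B.map Complex.re)ᵀ).map Complex.ofReal
          - Y * Q.map Complex.ofReal * ((B.map Complex.im)ᵀ).map Complex.ofReal)
        + Complex.I • (Y * Q.map Complex.ofReal * ((B.map Complex.re)ᵀ).map Complex.ofReal
          + X * Q.map Complex.ofReal * ((B.map Complex.im)ᵀ).map Complex.ofReal) := by
    simp only [Matrix.add_mul, Matrix.mul_add, Matrix.smul_mul, Matrix.mul_smul, smul_smul,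
      Complex.I_mul_I, neg_smul, one_smul, smul_sub, smul_add, sub_neg_eq_add, sub_eq_add_neg]
    abel
  rw [← decompB B] at key
  rw [← decompBT B] at key
  rw [key]
  simp only [map_ofReal_add, map_ofReal_sub, map_ofReal_mul]
  rfl

theorem stmt_15 (M N : ℕ) (s s' : ℕ) (A : Matrix (Fin N) (Fin N) ℝ)
    (B : Matrix (Fin M) (Fin N) ℂ) (hrank : B.rank = N)
    (hanti : (B * A.map Complex.ofReal * ((Bᴴ * B)⁻¹ * Bᴴ))ᴴ
        = -(B * A.map Complex.ofReal * ((Bᴴ * B)⁻¹ * Bᴴ)))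
    (hreal : ∀ i j, (Bᴴ * B) i j = Complex.ofReal (((Bᴴ * B).map Complex.re) i j))
    (hs : IsSparse s (B * A.map Complex.ofReal * ((Bᴴ * B)⁻¹ * Bᴴ)))
    (hs' : IsSparse s' (B * A.map Complex.ofReal * (((Bᴴ * B)⁻¹ * Bᴴ).map (starRingEnd ℂ)))) :
    IsSparse (2 * (s + s'))
      ((Matrix.fromRows (B.map Complex.re) (B.map Complex.im)) * A *
        ((((Matrix.fromRows (B.map Complex.re) (B.map Complex.im))ᵀ *
            (Matrix.fromRows (B.map Complex.re) (B.map Complex.im)))⁻¹) *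
          (Matrix.fromRows (B.map Complex.re) (B.map Complex.im))ᵀ)) := by
  classical
  set R : Matrix (Fin M) (Fin N) ℝ := B.map Complex.re with hRdef
  set I' : Matrix (Fin M) (Fin N) ℝ := B.map Complex.im with hIdef
  set G : Matrix (Fin N) (Fin N) ℝ := (Bᴴ * B).map Complex.re with hGdef
  -- `BᴴB` is the complexification of `G`
  have h1 : Bᴴ * B = G.map Complex.ofReal := by
    ext i j
    exact hreal i j
  -- `BᴴB` is invertible
  have hBu : IsUnit (Bᴴ * B) := by
    have h5 : (Bᴴ * B).rank = N := by
      open ComplexOrder in rw [Matrix.rank_conjTranspose_mul_self]; exact hrank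
    have htop : LinearMap.range (Bᴴ * B).mulVecLin = ⊤ := by
      apply Submodule.eq_top_of_finrank_eq
      rw [show Module.finrank ℂ (LinearMap.range (Bᴴ * B).mulVecLin) = (Bᴴ * B).rank from rfl, h5,
        Module.finrank_pi]
      simp
    rw [← Matrix.mulVec_surjective_iff_isUnit]
    intro v
    obtain ⟨w, hw⟩ := LinearMap.range_eq_top.mp htop v
    exact ⟨w, hw⟩
  have hdetG : IsUnit G.det := by
    have hd : IsUnit (Bᴴ * B).det := (Matrix.isUnit_iff_isUnit_det _).mp hBu
    have hmd : (G.map Complex.ofReal).det = Complex.ofReal G.det :=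
      (RingHom.map_det Complex.ofRealHom G).symm
    rw [h1, hmd] at hd
    rw [isUnit_iff_ne_zero] at hd ⊢
    intro h0
    apply hd
    rw [h0]
    exact Complex.ofReal_zero
  -- the inverse commutes with complexification
  have hGinv : (G.map Complex.ofReal)⁻¹ = G⁻¹.map Complex.ofReal := by
    apply Matrix.inv_eq_right_inv
    rw [← map_ofReal_mul, Matrix.mul_nonsing_inv G hdetG]
    ext i j
    by_cases h : i = j <;> simp [h, Matrix.one_apply]
  -- the Gram matrix of `B' = fromRows R I'`
  have h2 : (fromRows R I')ᵀ * fromRows R I' = G := by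
    ext j k
    simp only [hRdef, hIdef, hGdef, mul_apply, transpose_apply, fromRows_apply_inl,
      fromRows_apply_inr, map_apply, Fintype.sum_sum_type, conjTranspose_apply,
      Complex.re_sum, RCLike.star_def, Complex.mul_re, Complex.conj_re, Complex.conj_im]
    rw [← Finset.sum_add_distrib]
    congr 1; ext i; ring
  set P : Matrix (Fin N) (Fin N) ℝ := A * G⁻¹ with hPdef
  -- expansion of K
  have hK : B * A.map Complex.ofReal * ((Bᴴ * B)⁻¹ * Bᴴ)
      = (R * P * Rᵀ + I' * P * I'ᵀ).map Complex.ofReal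
        + Complex.I • ((I' * P * Rᵀ - R * P * I'ᵀ).map Complex.ofReal) := by
    rw [h1, hGinv]
    have : B * A.map Complex.ofReal * (G⁻¹.map Complex.ofReal * Bᴴ)
        = B * P.map Complex.ofReal * Bᴴ := by
      rw [hPdef, map_ofReal_mul]
      simp only [Matrix.mul_assoc]
    rw [this, Kexp₁]
  -- expansion of K'
  have hK' : B * A.map Complex.ofReal * (((Bᴴ * B)⁻¹ * Bᴴ).map (starRingEnd ℂ))
      = (R * P * Rᵀ - I' * P * I'ᵀ).map Complex.ofReal
        + Complex.I • ((I' * P * Rᵀ + R * P * I'ᵀ).map Complex.ofReal) := by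
    rw [h1, hGinv]
    have hconj : (G⁻¹.map Complex.ofReal * Bᴴ).map (starRingEnd ℂ)
        = G⁻¹.map Complex.ofReal * Bᵀ := by
      rw [Matrix.map_mul (f := starRingEnd ℂ)]
      congr 1
      · ext i j; simp [Complex.conj_ofReal]
      · ext i j; simp [conjTranspose_apply]
    rw [hconj]
    have : B * A.map Complex.ofReal * (G⁻¹.map Complex.ofReal * Bᵀ)
        = B * P.map Complex.ofReal * Bᵀ := by
      rw [hPdef, map_ofReal_mul]
      simp only [Matrix.mul_assoc]
    rw [this, Kexp₂]
  -- the block structure of B' A C_{B'}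
  have hbig : fromRows R I' * A * (((fromRows R I')ᵀ * fromRows R I')⁻¹ * (fromRows R I')ᵀ)
      = fromBlocks (R * P * Rᵀ) (R * P * I'ᵀ) (I' * P * Rᵀ) (I' * P * I'ᵀ) := by
    rw [h2, transpose_fromRows]
    have hassoc : fromRows R I' * A * (G⁻¹ * fromCols Rᵀ I'ᵀ)
        = (fromRows R I' * A * G⁻¹) * fromCols Rᵀ I'ᵀ := by
      simp only [Matrix.mul_assoc]
    rw [hassoc, Matrix.fromRows_mul, Matrix.fromRows_mul, fromRows_mul_fromCols]
    simp only [hPdef, Matrix.mul_assoc]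
  -- the key pointwise fact
  set K := B * A.map Complex.ofReal * ((Bᴴ * B)⁻¹ * Bᴴ) with hKdef
  set K' := B * A.map Complex.ofReal * (((Bᴴ * B)⁻¹ * Bᴴ).map (starRingEnd ℂ)) with hK'def
  have hzero : ∀ i j, K i j = 0 → K' i j = 0 →
      (R * P * Rᵀ) i j = 0 ∧ (R * P * I'ᵀ) i j = 0 ∧
      (I' * P * Rᵀ) i j = 0 ∧ (I' * P * I'ᵀ) i j = 0 := by
    intro i j hk hk'
    rw [hK] at hk
    rw [hK'] at hk'
    simp only [Matrix.add_apply, Matrix.smul_apply, Matrix.map_apply, Matrix.sub_apply,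
      Complex.ext_iff, Complex.add_re, Complex.add_im, Complex.ofReal_re, Complex.ofReal_im,
      Complex.mul_re, Complex.mul_im, Complex.I_re, Complex.I_im, smul_eq_mul,
      Complex.zero_re, Complex.zero_im] at hk hk'
    constructor
    · linarith [hk.1, hk'.1]
    constructor
    · linarith [hk.2, hk'.2]
    constructor
    · linarith [hk.2, hk'.2]
    · linarith [hk.1, hk'.1]
  have hmem : ∀ (a b : Fin M ⊕ Fin M),
      (fromRows R I' * A * (((fromRows R I')ᵀ * fromRows R I')⁻¹ * (fromRows R I')ᵀ)) a b ≠ 0 →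
      K (Sum.elim id id a) (Sum.elim id id b) ≠ 0 ∨
      K' (Sum.elim id id a) (Sum.elim id id b) ≠ 0 := by
    intro a b hab
    by_contra h
    push_neg at h
    obtain ⟨hk, hk'⟩ := h
    have h4 := hzero _ _ hk hk'
    rw [hbig] at hab
    apply hab
    cases a with
    | inl i =>
      cases b with
      | inl j => exact h4.1
      | inr j => exact h4.2.1
    | inr i =>
      cases b with
      | inl j => exact h4.2.2.1
      | inr j => exact h4.2.2.2
  constructor
  · intro a
    exact card_aux {j | K (Sum.elim id id a) j ≠ 0} {j | K' (Sum.elim id id a) j ≠ 0}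
      (hs.1 _) (hs'.1 _) _ (fun b hb => hmem a b hb)
  · intro b
    exact card_aux {i | K i (Sum.elim id id b) ≠ 0} {i | K' i (Sum.elim id id b) ≠ 0}
      (hs.2 _) (hs'.2 _) _ (fun a ha => hmem a b ha)
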